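/- (Core of Proposition 5: linear minimization over doubly stochastic matrices by sorting.) Let c ∈ ℝ^m and b ∈ ℝ^m with b_1 ≥ b_2 ≥ ... ≥ b_m ≥ 0. Then for every m×m doubly stochastic matrix Q, Σ_{j,k} c_j b_k Q_{jk} ≥ Σ_{k=1}^m c^↑_k b_k, and equality holds when Q is the permutation matrix of any permutation τ with c_{τ(1)} ≤ ... ≤ c_{τ(m)} (i.e. Q_{jk} = 1 iff j = τ(k)). In particular, the minimum of P ↦ Σ_{j,k} c_j b_k P_{jk} over all doubly stochastic matrices is attained at a permutation matrix that sorts c in increasing order. -/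

import Mathlib

/-- The nondecreasing rearrangement `x^↑` of a vector `x ∈ ℝ^n`. -/
noncomputable def sortedAsc {n : ℕ} (x : Fin n → ℝ) : Fin n → ℝ := x ∘ Tuple.sort x

/-- `Q` is a doubly stochastic `m × m` matrix: nonnegative entries, and all rows and
columns sum to `1`. -/
def IsDoublyStochastic {m : ℕ} (Q : Fin m → Fin m → ℝ) : Prop :=
  (∀ j k, 0 ≤ Q j k) ∧ (∀ j, ∑ k, Q j k = 1) ∧ (∀ k, ∑ j, Q j k = 1)

lemma antivary_sortedAsc_b {m : ℕ} (c b : Fin m → ℝ) (hb : Antitone b) :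
    Antivary (sortedAsc c) b := by
  intro i j hij
  have hji : j ≤ i := by
    by_contra h
    exact absurd (hb (le_of_not_ge h)) (not_le.mpr hij)
  exact Tuple.monotone_sort c hji

/-- Key: for any permutation ρ, the sorted pairing is minimal. -/
lemma key_perm_bound {m : ℕ} (c b : Fin m → ℝ) (hb : Antitone b)
    (ρ : Equiv.Perm (Fin m)) :
    ∑ k, sortedAsc c k * b k ≤ ∑ k, c (ρ k) * b k := by
  have hc : ∀ j, c j = sortedAsc c ((Tuple.sort c).symm j) := by
    intro j
    simp [sortedAsc]
  have h := (antivary_sortedAsc_b c b hb).sum_mul_le_sum_comp_perm_mul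
    (σ := ρ.trans (Tuple.sort c).symm)
  calc ∑ k, sortedAsc c k * b k ≤ ∑ k, sortedAsc c ((ρ.trans (Tuple.sort c).symm) k) * b k := h
    _ = ∑ k, c (ρ k) * b k := by
        refine Finset.sum_congr rfl fun k _ => ?_
        simp only [Equiv.trans_apply]
        rw [← hc (ρ k)]

/-- (Core of Proposition 5: linear minimization over doubly stochastic matrices by sorting.)
For `c ∈ ℝ^m` and `b_1 ≥ ... ≥ b_m ≥ 0`: every doubly stochastic `Q` satisfies
`Σ_{j,k} c_j b_k Q_{jk} ≥ Σ_k c^↑_k b_k`, and equality holds for the permutation matrix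
(`Q_{jk} = 1` iff `j = τ(k)`) of any `τ` sorting `c` in increasing order. Hence the minimum
over doubly stochastic matrices is attained at a permutation matrix sorting `c`. -/
theorem linear_min_doubly_stochastic {m : ℕ} (c b : Fin m → ℝ) (hb : Antitone b)
    (hb0 : ∀ k, 0 ≤ b k) :
    (∀ Q : Fin m → Fin m → ℝ, IsDoublyStochastic Q →
      ∑ k, sortedAsc c k * b k ≤ ∑ j, ∑ k, c j * b k * Q j k) ∧
    (∀ τ : Equiv.Perm (Fin m), Monotone (c ∘ τ) →
      IsDoublyStochastic (fun j k => if j = τ k then (1 : ℝ) else 0) ∧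
      ∑ j, ∑ k, c j * b k * (if j = τ k then (1 : ℝ) else 0) =
        ∑ k, sortedAsc c k * b k) := by
  constructor
  · intro Q hQ
    -- Birkhoff's theorem
    have hmem : (Matrix.of Q) ∈ doublyStochastic ℝ (Fin m) := by
      rw [mem_doublyStochastic_iff_sum]
      exact ⟨hQ.1, hQ.2.1, hQ.2.2⟩
    obtain ⟨w, hw0, hw1, hwQ⟩ := exists_eq_sum_perm_of_mem_doublyStochastic hmem
    have hQval : ∀ j k, Q j k = ∑ σ : Equiv.Perm (Fin m), w σ * σ.permMatrix ℝ j k := by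
      intro j k
      have h0 : Q j k = (∑ σ : Equiv.Perm (Fin m), w σ • σ.permMatrix ℝ) j k := by
        rw [hwQ]; rfl
      rw [h0, Matrix.sum_apply]
      rfl
    have hperm : ∀ σ : Equiv.Perm (Fin m),
        ∑ j, ∑ k, c j * b k * σ.permMatrix ℝ j k = ∑ k, c (σ.symm k) * b k := by
      intro σ
      have h1 : ∀ j : Fin m, ∑ k, c j * b k * σ.permMatrix ℝ j k = c j * b (σ j) := by
        intro j
        have : ∀ k, c j * b k * σ.permMatrix ℝ j k
            = if σ j = k then c j * b k else 0 := by
          intro k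
          by_cases h : σ j = k
          · simp [Equiv.Perm.permMatrix, PEquiv.toMatrix_apply, Equiv.toPEquiv_apply, h]
          · simp [Equiv.Perm.permMatrix, PEquiv.toMatrix_apply, Equiv.toPEquiv_apply, h,
              Option.mem_def, eq_comm]
            exact fun hk => absurd hk.symm h
        rw [Finset.sum_congr rfl fun k _ => this k]
        simp
      rw [Finset.sum_congr rfl fun j _ => h1 j]
      have := Equiv.sum_comp σ.symm (fun j => c j * b (σ j))
      rw [← this]
      simp
    calc ∑ k, sortedAsc c k * b k
        = ∑ σ : Equiv.Perm (Fin m), w σ * ∑ k, sortedAsc c k * b k := by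
          rw [← Finset.sum_mul, hw1, one_mul]
      _ ≤ ∑ σ : Equiv.Perm (Fin m), w σ * ∑ k, c (σ.symm k) * b k := by
          refine Finset.sum_le_sum fun σ _ => ?_
          exact mul_le_mul_of_nonneg_left (key_perm_bound c b hb σ.symm) (hw0 σ)
      _ = ∑ σ : Equiv.Perm (Fin m), w σ * ∑ j, ∑ k, c j * b k * σ.permMatrix ℝ j k := by
          refine Finset.sum_congr rfl fun σ _ => ?_
          rw [hperm σ]
      _ = ∑ j, ∑ k, ∑ σ : Equiv.Perm (Fin m), w σ * (c j * b k * σ.permMatrix ℝ j k) := by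
          simp_rw [Finset.mul_sum]
          rw [Finset.sum_comm]
          refine Finset.sum_congr rfl fun j _ => Finset.sum_comm
      _ = ∑ j, ∑ k, c j * b k * Q j k := by
          refine Finset.sum_congr rfl fun j _ => Finset.sum_congr rfl fun k _ => ?_
          rw [hQval j k, Finset.mul_sum]
          refine Finset.sum_congr rfl fun σ _ => ?_
          ring
  · intro τ hτ
    have hsort : c ∘ τ = sortedAsc c := Tuple.comp_sort_eq_comp_iff_monotone.mpr hτ
    refine ⟨⟨fun j k => by positivity, fun j => ?_, fun k => ?_⟩, ?_⟩
    · have : ∀ k : Fin m, (if j = τ k then (1 : ℝ) else 0)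
          = if k = τ.symm j then (1 : ℝ) else 0 := by
        intro k
        by_cases h : j = τ k
        · simp [h]
        · rw [if_neg h, if_neg]
          intro hk
          exact h (by simp [hk])
      rw [Finset.sum_congr rfl fun k _ => this k]
      simp
    · simp
    · rw [Finset.sum_comm]
      refine Finset.sum_congr rfl fun k _ => ?_
      have : ∀ j : Fin m, c j * b k * (if j = τ k then (1 : ℝ) else 0)
          = if j = τ k then c j * b k else 0 := by
        intro j; split <;> simp
      rw [Finset.sum_congr rfl fun j _ => this j]
      rw [Finset.sum_ite_eq' Finset.univ (τ k) (fun j => c j * b k)]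
      simp only [Finset.mem_univ, if_true]
      rw [← congrFun hsort k]
      rfl
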